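/- Let m₁ = 2, m₂ = (2 + √13)/3, and f(z) = (z − m₁)(z − m₂)(m₁·z + 1)(m₂·z + 1)/z². Let R > 1, let φ be holomorphic on the annulus A(R) = {z ∈ ℂ : 1/R < |z| < R}, and let k ≥ 3 be an integer. Then the contour integral of f(w)·φ(w^k)/w over the positively oriented unit circle equals 0. -/

import Mathlib

open Complex Metric

lemma rot_aux (g : ℂ → ℂ) (a : ℝ) :
    (∮ w in C(0, 1), g w) =
      Complex.exp (a * I) * ∮ w in C(0, 1), g (Complex.exp (a * I) * w) := by
  have hmap : ∀ θ : ℝ, circleMap 0 1 θ = Complex.exp (θ * I) := by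
    intro θ; simp [circleMap]
  simp only [circleIntegral, deriv_circleMap, smul_eq_mul, hmap]
  set u : ℝ → ℂ := fun θ => Complex.exp (θ * I) * I * g (Complex.exp (θ * I)) with hu
  have hper : Function.Periodic u (2 * Real.pi) := by
    intro θ
    have he : Complex.exp ((↑(θ + 2 * Real.pi)) * I) = Complex.exp (↑θ * I) := by
      push_cast
      rw [add_mul, Complex.exp_add, Complex.exp_two_pi_mul_I, mul_one]
    show cexp (↑(θ + 2 * Real.pi) * I) * I * g (cexp (↑(θ + 2 * Real.pi) * I)) = _
    rw [he]
  have h1 : (∫ θ in (0:ℝ)..2 * Real.pi, u θ) = ∫ θ in a..a + 2 * Real.pi, u θ := by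
    have := hper.intervalIntegral_add_eq 0 a
    simpa using this
  have h2 : (∫ θ in a..a + 2 * Real.pi, u θ) = ∫ θ in (0:ℝ)..2 * Real.pi, u (θ + a) := by
    rw [intervalIntegral.integral_comp_add_right]
    ring_nf
  have h3 : ∀ θ : ℝ, u (θ + a) =
      Complex.exp (a * I) * (Complex.exp (θ * I) * I * g (Complex.exp (a * I) * Complex.exp (θ * I))) := by
    intro θ
    simp only [hu, Complex.ofReal_add, add_mul, Complex.exp_add]
    ring_nf
  calc (∫ θ in (0:ℝ)..2 * Real.pi, u θ)
      = ∫ θ in (0:ℝ)..2 * Real.pi, u (θ + a) := by rw [h1, h2]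
    _ = ∫ θ in (0:ℝ)..2 * Real.pi,
        Complex.exp (a * I) * (Complex.exp (θ * I) * I * g (Complex.exp (a * I) * Complex.exp (θ * I))) := by
        simp only [h3]
    _ = Complex.exp (a * I) * ∫ θ in (0:ℝ)..2 * Real.pi,
        Complex.exp (θ * I) * I * g (Complex.exp (a * I) * Complex.exp (θ * I)) := by
        rw [intervalIntegral.integral_const_mul]

lemma mono_zero (φ : ℂ → ℂ) (k : ℕ) (hk : 3 ≤ k) (j : ℤ) (hj0 : j + 1 ≠ 0)
    (hjk : (j + 1).natAbs < k) :
    (∮ w in C(0, 1), w ^ j * φ (w ^ k)) = 0 := by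
  set a : ℝ := 2 * Real.pi / k with ha
  set c : ℂ := Complex.exp (a * I) with hc
  have hkc : (k : ℂ) ≠ 0 := Nat.cast_ne_zero.mpr (by omega)
  have hck : c ^ k = 1 := by
    rw [hc, ← Complex.exp_nat_mul]
    have : (k : ℂ) * (↑a * I) = 2 * Real.pi * I := by
      rw [ha]; push_cast; field_simp
    rw [this, Complex.exp_two_pi_mul_I]
  have key := rot_aux (fun w => w ^ j * φ (w ^ k)) a
  have heq : (fun w : ℂ => (c * w) ^ j * φ ((c * w) ^ k)) =
      fun w : ℂ => c ^ j * (w ^ j * φ (w ^ k)) := by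
    funext w
    rw [mul_zpow, mul_pow, hck, one_mul]
    ring
  rw [heq, circleIntegral.integral_const_mul, ← mul_assoc, ← hc] at key
  have hcj : c * c ^ j = Complex.exp (((j : ℂ) + 1) * (a * I)) := by
    rw [hc, ← Complex.exp_int_mul, ← Complex.exp_add]
    ring_nf
  have hne : c * c ^ j ≠ 1 := by
    rw [hcj]
    intro h
    rw [Complex.exp_eq_one_iff] at h
    obtain ⟨n, hn⟩ := h
    have hre : ((j : ℝ) + 1) * a = n * (2 * Real.pi) := by
      rw [show ((j:ℂ) + 1) * (↑a * I) = (((j:ℝ) + 1) * a : ℝ) * I by push_cast; ring,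
        show (n:ℂ) * (2 * ↑Real.pi * I) = ((n * (2 * Real.pi) : ℝ)) * I by push_cast; ring] at hn
      exact_mod_cast mul_right_cancel₀ Complex.I_ne_zero hn
    rw [ha] at hre
    have hkr : (k : ℝ) ≠ 0 := Nat.cast_ne_zero.mpr (by omega)
    have hjnk : (j : ℝ) + 1 = n * k := by
      have h2π : (2 * Real.pi) ≠ 0 := by positivity
      apply mul_right_cancel₀ h2π
      field_simp at hre
      linear_combination (2 * Real.pi) * hre
    have hZ : j + 1 = n * k := by exact_mod_cast hjnk
    rcases eq_or_ne n 0 with h0 | h0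
    · rw [h0] at hZ; simp at hZ; exact hj0 hZ
    · have hA : (j + 1).natAbs = n.natAbs * k := by
        rw [hZ, Int.natAbs_mul, Int.natAbs_natCast]
      have h1 : 1 ≤ n.natAbs := Int.natAbs_pos.mpr h0
      have h2 : k ≤ n.natAbs * k := Nat.le_mul_of_pos_left k h1
      omega
  have hz : (1 - c * c ^ j) * (∮ w in C(0, 1), w ^ j * φ (w ^ k)) = 0 := by
    rw [sub_mul, one_mul, sub_eq_zero]
    exact key
  rcases mul_eq_zero.mp hz with h | h
  · exact absurd (sub_eq_zero.mp h).symm hne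
  · exact h


lemma circleIntegral_add' {f g : ℂ → ℂ} {c : ℂ} {R : ℝ}
    (hf : CircleIntegrable f c R) (hg : CircleIntegrable g c R) :
    (∮ z in C(c, R), (f z + g z)) = (∮ z in C(c, R), f z) + ∮ z in C(c, R), g z := by
  simp only [circleIntegral, smul_add]
  exact intervalIntegral.integral_add hf.out hg.out

lemma circleIntegral_add_zero {f g : ℂ → ℂ}
    (hf : CircleIntegrable f 0 1) (hg : CircleIntegrable g 0 1)
    (h1 : (∮ z in C(0, 1), f z) = 0) (h2 : (∮ z in C(0, 1), g z) = 0) :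
    (∮ z in C(0, 1), (f z + g z)) = 0 := by
  rw [circleIntegral_add' hf hg, h1, h2, add_zero]





/-- For `m₁ = 2`, `m₂ = (2 + √13)/3`, `f(z) = (z − m₁)(z − m₂)(m₁z + 1)(m₂z + 1)/z²`,
any `φ` holomorphic on the annulus `A(R)` with `R > 1`, and any integer `k ≥ 3`, the contour
integral of `f(w) φ(w^k)/w` over the positively oriented unit circle vanishes. -/
theorem stmt_18 (m₁ m₂ : ℝ) (hm₁ : m₁ = 2) (hm₂ : m₂ = (2 + Real.sqrt 13) / 3)
    (f : ℂ → ℂ)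
    (hf : ∀ z : ℂ, f z =
      (z - (m₁ : ℂ)) * (z - (m₂ : ℂ)) * ((m₁ : ℂ) * z + 1) * ((m₂ : ℂ) * z + 1) / z ^ 2)
    (R : ℝ) (hR : 1 < R) (φ : ℂ → ℂ)
    (hhol : DifferentiableOn ℂ φ {z : ℂ | 1 / R < ‖z‖ ∧ ‖z‖ < R})
    (k : ℕ) (hk : 3 ≤ k) :
    (∮ w in C(0, 1), f w * φ (w ^ k) / w) = 0 := by

  set a : ℂ := (m₁ : ℂ) with hA
  set b : ℂ := (m₂ : ℂ) with hB
  set s : ℂ := a * (1 - b ^ 2) + b * (1 - a ^ 2) with hS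
  -- the residue coefficient vanishes
  have htR : (1 - m₁ ^ 2) * (1 - m₂ ^ 2) - 2 * (m₁ * m₂) = 0 := by
    subst hm₁ hm₂
    have h13 : Real.sqrt 13 ^ 2 = 13 := Real.sq_sqrt (by norm_num)
    nlinarith [h13]
  have ht : (1 - a ^ 2) * (1 - b ^ 2) - 2 * (a * b) = 0 := by
    rw [hA, hB]
    exact_mod_cast congrArg (Complex.ofReal) htR
  -- continuity of the pieces on the sphere
  have hmaps : Set.MapsTo (fun w : ℂ => w ^ k) (sphere (0:ℂ) 1)
      {z : ℂ | 1 / R < ‖z‖ ∧ ‖z‖ < R} := by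
    intro w hw
    have : ‖w‖ = 1 := by simpa using hw
    constructor
    · simp only [Set.mem_setOf_eq, norm_pow, this, one_pow, one_div]
      exact inv_lt_one_of_one_lt₀ hR
    · simp only [norm_pow, this, one_pow]
      exact hR
  have hφc : ContinuousOn (fun w : ℂ => φ (w ^ k)) (sphere (0:ℂ) 1) :=
    hhol.continuousOn.comp ((continuous_pow k).continuousOn) hmaps
  have hzc : ∀ j : ℤ, ContinuousOn (fun w : ℂ => w ^ j) (sphere (0:ℂ) 1) := by
    intro j w hw
    have hw0 : w ≠ 0 := by
      intro h; rw [h] at hw; simp at hw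
    exact (continuousAt_zpow₀ w j (Or.inl hw0)).continuousWithinAt
  have hint : ∀ (c : ℂ) (j : ℤ),
      CircleIntegrable (fun w : ℂ => c * (w ^ j * φ (w ^ k))) 0 1 := by
    intro c j
    exact ContinuousOn.circleIntegrable zero_le_one
      (((hzc j).mul hφc).const_smul c)
  have hmono : ∀ (c : ℂ) (j : ℤ), j + 1 ≠ 0 → (j + 1).natAbs < k →
      (∮ w in C(0, 1), c * (w ^ j * φ (w ^ k))) = 0 := by
    intro c j h1 h2
    rw [circleIntegral.integral_const_mul, mono_zero φ k hk j h1 h2, mul_zero]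
  -- rewrite the integrand
  have hEq : Set.EqOn (fun w : ℂ => f w * φ (w ^ k) / w)
      (fun w : ℂ => (a * b) * (w ^ (-3 : ℤ) * φ (w ^ k)) + ((-s) * (w ^ (-2 : ℤ) * φ (w ^ k)) +
        (s * (w ^ (0 : ℤ) * φ (w ^ k)) + (a * b) * (w ^ (1 : ℤ) * φ (w ^ k)))))
      (sphere (0:ℂ) 1) := by
    intro w hw
    have hw0 : w ≠ 0 := by
      intro h; rw [h] at hw; simp at hw
    simp only [hf w, hS]
    rw [show (-3 : ℤ) = -(3 : ℕ) by norm_num, show (-2 : ℤ) = -(2 : ℕ) by norm_num,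
      zpow_neg, zpow_neg, zpow_natCast, zpow_natCast, zpow_zero, zpow_one]
    field_simp
    linear_combination (w ^ 2 * φ (w ^ k)) * ht
  rw [circleIntegral.integral_congr zero_le_one hEq]
  exact circleIntegral_add_zero
    (f := fun w => a * b * (w ^ (-3 : ℤ) * φ (w ^ k)))
    (g := fun w => (-s) * (w ^ (-2 : ℤ) * φ (w ^ k)) +
      (s * (w ^ (0 : ℤ) * φ (w ^ k)) + a * b * (w ^ (1 : ℤ) * φ (w ^ k))))
    (hint (a * b) (-3))
    ((hint (-s) (-2)).add ((hint s 0).add (hint (a * b) 1)))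
    (hmono (a * b) (-3) (by norm_num) (by norm_num; omega))
    (circleIntegral_add_zero
      (f := fun w => (-s) * (w ^ (-2 : ℤ) * φ (w ^ k)))
      (g := fun w => s * (w ^ (0 : ℤ) * φ (w ^ k)) + a * b * (w ^ (1 : ℤ) * φ (w ^ k)))
      (hint (-s) (-2)) ((hint s 0).add (hint (a * b) 1))
      (hmono (-s) (-2) (by norm_num) (by norm_num; omega))
      (circleIntegral_add_zero
        (f := fun w => s * (w ^ (0 : ℤ) * φ (w ^ k)))
        (g := fun w => a * b * (w ^ (1 : ℤ) * φ (w ^ k)))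
        (hint s 0) (hint (a * b) 1)
        (hmono s 0 (by norm_num) (by norm_num; omega))
        (hmono (a * b) 1 (by norm_num) (by norm_num; omega))))
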